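/- Let X be a connected graph, let b ∈ 𝓑X, and let e₁, e₂ ∈ δb. Suppose there exist a path p contained in the induced subgraph X[b] and a path q contained in the induced subgraph X[b*], each connecting an endpoint of e₁ to an endpoint of e₂. Then there exists a tight element b' ∈ 𝓑X such that δb' ⊆ δb and e₁, e₂ ∈ δb'. -/

import Mathlib

open SimpleGraph

namespace Paper

variable {V W : Type*}

/-- Locally finite graph: every vertex has finite degree. -/
def LocFin (G : SimpleGraph V) : Prop := ∀ v : V, (G.neighborSet v).Finite

/-- All vertex degrees are at most `d`. -/
def DegLe (G : SimpleGraph V) (d : ℕ) : Prop :=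
  ∀ v : V, (G.neighborSet v).Finite ∧ (G.neighborSet v).ncard ≤ d

/-- Bounded valence. -/
def BddVal (G : SimpleGraph V) : Prop := ∃ d : ℕ, DegLe G d

/-- `(l, e)`-quasi-isometric embedding between the vertex sets of two graphs. -/
def IsQIE (G : SimpleGraph V) (H : SimpleGraph W) (l e : ℝ) (f : V → W) : Prop :=
  ∀ x y : V,
    (G.dist x y : ℝ) / l - e ≤ (H.dist (f x) (f y) : ℝ) ∧
      (H.dist (f x) (f y) : ℝ) ≤ l * (G.dist x y : ℝ) + e

/-- Coarse surjectivity: every vertex of the target lies within distance `e` of the image. -/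
def CoarseSurj (H : SimpleGraph W) (e : ℝ) (f : V → W) : Prop :=
  ∀ w : W, ∃ x : V, (H.dist w (f x) : ℝ) ≤ e

/-- `(l, e)`-quasi-isometry. -/
def IsQI (G : SimpleGraph V) (H : SimpleGraph W) (l e : ℝ) (f : V → W) : Prop :=
  IsQIE G H l e f ∧ CoarseSurj H e f

/-- `g` is an `h`-quasi-inverse of `f`. -/
def IsQInv (G : SimpleGraph V) (h : ℝ) (f : V → W) (g : W → V) : Prop :=
  ∀ x : V, (G.dist (g (f x)) x : ℝ) ≤ h

/-- Reachability by a walk all of whose vertices avoid the set `S`. -/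
def ReachOut (G : SimpleGraph V) (S : Set V) (a b : V) : Prop :=
  ∃ w : G.Walk a b, ∀ v ∈ w.support, v ∉ S

/-- A one-way infinite simple ray. -/
def RayIn (G : SimpleGraph V) (r : ℕ → V) : Prop :=
  Function.Injective r ∧ ∀ n : ℕ, G.Adj (r n) (r (n + 1))

/-- End-equivalence of rays: for every finite vertex set they have tails in the same
connected component of the graph with that set deleted. -/
def EndEquiv (G : SimpleGraph V) (r₁ r₂ : ℕ → V) : Prop :=
  ∀ S : Set V, S.Finite → ∃ N : ℕ, ∀ m n : ℕ, N ≤ m → N ≤ n → ReachOut G S (r₁ m) (r₂ n)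

/-- Two points (encoded as sequences: a constant sequence for a vertex, a ray for an end)
lie in distinct connected components of `G` with the vertex set `S` deleted. -/
def SepComps (G : SimpleGraph V) (S : Set V) (a b : ℕ → V) : Prop :=
  ∃ N : ℕ,
    (∀ m n : ℕ, N ≤ m → N ≤ n → ReachOut G S (a m) (a n)) ∧
    (∀ m n : ℕ, N ≤ m → N ≤ n → ReachOut G S (b m) (b n)) ∧
    (∀ m n : ℕ, N ≤ m → N ≤ n → ¬ ReachOut G S (a m) (b n))

/-- `vs(G) ≥ N`: any vertex set separating two ends has at least `N` elements. -/
def VsGe (G : SimpleGraph V) (N : ℕ) : Prop :=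
  ∀ r₁ r₂ : ℕ → V, RayIn G r₁ → RayIn G r₂ →
    ∀ S : Set V, S.Finite → SepComps G S r₁ r₂ → N ≤ S.ncard

/-- `vs(G) ≥ c` for a real threshold `c`. -/
def VsGeR (G : SimpleGraph V) (c : ℝ) : Prop :=
  ∀ r₁ r₂ : ℕ → V, RayIn G r₁ → RayIn G r₂ →
    ∀ S : Set V, S.Finite → SepComps G S r₁ r₂ → c ≤ (S.ncard : ℝ)

/-- `U` is a connected component of `G` with the vertex set `A` deleted. -/
def IsCompOut (G : SimpleGraph V) (A U : Set V) : Prop :=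
  ∃ a ∈ U, ∀ b : V, ReachOut G A a b ↔ b ∈ U

/-- The edge coboundary `δb` of a vertex set `b`. -/
def cob (G : SimpleGraph V) (b : Set V) : Set (Sym2 V) :=
  {e | ∃ x y : V, e = s(x, y) ∧ G.Adj x y ∧ x ∈ b ∧ y ∉ b}

/-- Membership in the Boolean ring `𝓑G` of vertex sets with finite coboundary. -/
def MemBX (G : SimpleGraph V) (b : Set V) : Prop := (cob G b).Finite

/-- The set of endpoints of the edges of `δb`. -/
def cobVerts (G : SimpleGraph V) (b : Set V) : Set V :=
  {v | ∃ w : V, s(v, w) ∈ cob G b}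

/-- A tight element: both sides induce connected subgraphs. -/
def Tight (G : SimpleGraph V) (b : Set V) : Prop :=
  (G.induce b).Connected ∧ (G.induce bᶜ).Connected

/-- Vertices of `A` that are endpoints of an edge with the other endpoint in `U`. -/
def AttachSet (G : SimpleGraph V) (A U : Set V) : Set V :=
  {v | v ∈ A ∧ ∃ u ∈ U, G.Adj v u}

/-- `incut(A) ≤ k` for a vertex set `A`, with the intrinsic metric of `G.induce A`. -/
def IncutBddSet (G : SimpleGraph V) (A : Set V) (k : ℕ) : Prop :=
  ∀ U : Set V, IsCompOut G A U →
    ∀ v w : A, (v : V) ∈ AttachSet G A U → (w : V) ∈ AttachSet G A U →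
      (G.induce A).dist v w ≤ k

/-- `outcut(A) ≤ k` for a vertex set `A`. -/
def OutcutBddSet (G : SimpleGraph V) (A : Set V) (k : ℕ) : Prop :=
  ∀ U : Set V, IsCompOut G A U → IncutBddSet G U k

/-- Uniform coboundary for a vertex set. -/
def UnifCobSet (G : SimpleGraph V) (A : Set V) : Prop :=
  (∃ k : ℕ, IncutBddSet G A k) ∧ (∃ k : ℕ, OutcutBddSet G A k)

/-- `incut(L) ≤ k` for a subgraph `L`, with its own intrinsic metric. -/
def IncutBddSub (G : SimpleGraph V) (L : G.Subgraph) (k : ℕ) : Prop :=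
  ∀ U : Set V, IsCompOut G L.verts U →
    ∀ v w : L.verts, (v : V) ∈ AttachSet G L.verts U → (w : V) ∈ AttachSet G L.verts U →
      L.coe.dist v w ≤ k

/-- `outcut(L) ≤ k` for a subgraph `L`. -/
def OutcutBddSub (G : SimpleGraph V) (L : G.Subgraph) (k : ℕ) : Prop :=
  ∀ U : Set V, IsCompOut G L.verts U → IncutBddSet G U k

/-- Uniform coboundary for a subgraph. -/
def UnifCobSub (G : SimpleGraph V) (L : G.Subgraph) : Prop :=
  (∃ k : ℕ, IncutBddSub G L k) ∧ (∃ k : ℕ, OutcutBddSub G L k)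

/-- Quasi-transitive graph: the automorphism group has finitely many orbits of vertices. -/
def QuasiTransitive (G : SimpleGraph V) : Prop :=
  ∃ F : Set V, F.Finite ∧ ∀ v : V, ∃ e : G ≃g G, ∃ w ∈ F, e w = v

/-- Hausdorff distance between two vertex sets is at most `r`. -/
def HausBdd (G : SimpleGraph V) (A B : Set V) (r : ℝ) : Prop :=
  (∀ a ∈ A, ∃ b ∈ B, (G.dist a b : ℝ) ≤ r) ∧ (∀ b ∈ B, ∃ a ∈ A, (G.dist a b : ℝ) ≤ r)

/-- Reachability by a walk avoiding the edge set `F`. -/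
def ReachAvoidE (G : SimpleGraph V) (F : Set (Sym2 V)) (a b : V) : Prop :=
  ∃ w : G.Walk a b, ∀ e ∈ w.edges, e ∉ F

/-- The ends of the rays `r₁`, `r₂` are separated by deleting the edge set `F`. -/
def SepEnds (G : SimpleGraph V) (F : Set (Sym2 V)) (r₁ r₂ : ℕ → V) : Prop :=
  ∃ N : ℕ, ∀ m n : ℕ, N ≤ m → N ≤ n → ¬ ReachAvoidE G F (r₁ m) (r₂ n)

/-- Accessibility: some `k ≥ 1` such that any two distinct ends can be separated by
deleting at most `k` edges. -/
def Accessible (G : SimpleGraph V) : Prop :=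
  ∃ k : ℕ, 1 ≤ k ∧ ∀ r₁ r₂ : ℕ → V, RayIn G r₁ → RayIn G r₂ → ¬ EndEquiv G r₁ r₂ →
    ∃ F : Set (Sym2 V), F.Finite ∧ F.ncard ≤ k ∧ SepEnds G F r₁ r₂

/-- `l`-quasi-action of a group on the vertex set of a graph. -/
def IsQAct {G₀ : Type*} [Group G₀] (G : SimpleGraph V) (l : ℝ) (φ : G₀ → V → V) : Prop :=
  (∀ g : G₀, IsQI G G l l (φ g)) ∧
  (∀ (g h : G₀) (x : V), (G.dist (φ (g * h) x) (φ g (φ h x)) : ℝ) ≤ l) ∧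
  (∀ g : G₀, IsQInv G l (φ g) (φ g⁻¹) ∧ IsQInv G l (φ g⁻¹) (φ g))

/-- `B`-cobounded quasi-action. -/
def Cobdd {G₀ : Type*} [Group G₀] (G : SimpleGraph V) (B : ℝ) (φ : G₀ → V → V) : Prop :=
  ∀ x y : V, ∃ g : G₀, (G.dist x (φ g y) : ℝ) ≤ B

/-- The diameter (in `ℕ`) of a vertex set. -/
noncomputable def setDiam (G : SimpleGraph V) (S : Set V) : ℕ :=
  sSup {d : ℕ | ∃ x ∈ S, ∃ y ∈ S, G.dist x y = d}

/-- 2-connected: connected, at least three vertices, and deleting any single vertex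
leaves it connected. -/
def TwoConnected (G : SimpleGraph V) : Prop :=
  G.Connected ∧ (∃ a b c : V, a ≠ b ∧ a ≠ c ∧ b ≠ c) ∧
    ∀ v : V, (G.induce {w : V | w ≠ v}).Connected

/-- Tree decomposition. -/
def IsTreeDecomp {VT : Type*} (X : SimpleGraph V) (T : SimpleGraph VT) (B : VT → Set V) :
    Prop :=
  T.IsTree ∧ (∀ x : V, ∃ u : VT, x ∈ B u) ∧
    ∀ u v w : VT, (∃ p : T.Walk u w, p.IsPath ∧ v ∈ p.support) → B u ∩ B w ⊆ B v

/-- Bounded adhesion. -/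
def BddAdhesion {VT : Type*} (T : SimpleGraph VT) (B : VT → Set V) : Prop :=
  ∃ N : ℕ, ∀ u w : VT, T.Adj u w → (B u ∩ B w).Finite ∧ (B u ∩ B w).ncard ≤ N

/-- Connected parts. -/
def ConnParts {VT : Type*} (X : SimpleGraph V) (B : VT → Set V) : Prop :=
  ∀ u : VT, (X.induce (B u)).Connected

/-- Replacing each bag by its closed `r`-neighbourhood. -/
def ballBag {VT : Type*} (X : SimpleGraph V) (B : VT → Set V) (r : ℕ) : VT → Set V :=
  fun u => {x : V | ∃ y ∈ B u, X.dist x y ≤ r}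

/-- A point of `G` which is either a vertex lying outside `B(S;R)` (encoded as a constant
sequence) or an end (encoded as a ray representing it). -/
def PtSeq (G : SimpleGraph V) (S : Set V) (R : ℝ) (a : ℕ → V) : Prop :=
  (∃ v : V, a = Function.const ℕ v ∧ ∀ s ∈ S, R < (G.dist v s : ℝ)) ∨ RayIn G a

/-- A subring of `𝓑G`: contains `∅`, and is closed under intersection and
symmetric difference. -/
def IsSubring (G : SimpleGraph V) (R : Set (Set V)) : Prop :=
  (∀ b ∈ R, MemBX G b) ∧ ∅ ∈ R ∧
    (∀ a ∈ R, ∀ b ∈ R, a ∩ b ∈ R) ∧ (∀ a ∈ R, ∀ b ∈ R, symmDiff a b ∈ R)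

/-- The subring generated by a family. -/
def genSubring (G : SimpleGraph V) (E : Set (Set V)) : Set (Set V) :=
  ⋂₀ {R : Set (Set V) | IsSubring G R ∧ E ⊆ R}

/-- Two vertex sets are nested. -/
def Nested (a b : Set V) : Prop :=
  a ∩ b = ∅ ∨ a ∩ bᶜ = ∅ ∨ aᶜ ∩ b = ∅ ∨ aᶜ ∩ bᶜ = ∅

/-- A nested family: closed under complementation and pairwise nested. -/
def NestedFam (E : Set (Set V)) : Prop :=
  (∀ b ∈ E, bᶜ ∈ E) ∧ ∀ a ∈ E, ∀ b ∈ E, Nested a b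

/-- A `G₀`-invariant family of vertex sets. -/
def GInvFam (G₀ : Type*) [Group G₀] [MulAction G₀ V] (E : Set (Set V)) : Prop :=
  ∀ g : G₀, ∀ b ∈ E, (fun x => g • x) '' b ∈ E

/-- A `G₀`-finite family of vertex sets: it meets only finitely many orbits. -/
def GFinFam (G₀ : Type*) [Group G₀] [MulAction G₀ V] (E : Set (Set V)) : Prop :=
  ∃ F : Set (Set V), F.Finite ∧ F ⊆ E ∧
    ∀ b ∈ E, ∃ g : G₀, ∃ c ∈ F, (fun x => g • x) '' c = b

/-- `g` stabilises the subgraph `L` setwise. -/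
def StabSub {G₀ : Type*} [Group G₀] [MulAction G₀ V] (G : SimpleGraph V) (g : G₀)
    (L : G.Subgraph) : Prop :=
  (∀ v : V, v ∈ L.verts ↔ g • v ∈ L.verts) ∧
    (∀ a b : V, L.Adj a b ↔ L.Adj (g • a) (g • b))

end Paper


namespace Stmt12Aux

open SimpleGraph

variable {V : Type*} {X : SimpleGraph V}

/-- Reachability in an induced subgraph iff there is a walk with support in the set. -/
lemma reach_iff {S : Set V} {u v : V} (hu : u ∈ S) (hv : v ∈ S) :
    (X.induce S).Reachable ⟨u, hu⟩ ⟨v, hv⟩ ↔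
      ∃ p : X.Walk u v, ∀ x ∈ p.support, x ∈ S := by
  constructor
  · rintro ⟨p⟩
    refine ⟨p.map (Embedding.induce S).toHom, ?_⟩
    intro x hx
    replace hx : x ∈ (p.map (Embedding.induce S).toHom).support := hx
    rw [Walk.support_map, List.mem_map] at hx
    obtain ⟨⟨a, ha⟩, -, rfl⟩ := hx
    exact ha
  · rintro ⟨p, hp⟩
    have hle : p.toSubgraph ≤ (⊤ : X.Subgraph).induce S := by
      constructor
      · intro x hx
        exact hp x (p.mem_verts_toSubgraph.mp hx)
      · intro x y h
        exact ⟨hp x (p.mem_verts_toSubgraph.mp (p.toSubgraph.edge_vert h)),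
               hp y (p.mem_verts_toSubgraph.mp (p.toSubgraph.edge_vert h.symm)),
               p.toSubgraph.adj_sub h⟩
    have := Reachable.map (Subgraph.inclusion hle)
      (p.toSubgraph_connected ⟨_, p.start_mem_verts_toSubgraph⟩
        ⟨_, p.end_mem_verts_toSubgraph⟩)
    rw [induce_eq_coe_induce_top]
    exact this

end Stmt12Aux

open Paper Stmt12Aux SimpleGraph in
theorem stmt12 {V : Type*} (X : SimpleGraph V) (hc : X.Connected)
    (b : Set V) (hb : MemBX X b)
    (x₁ y₁ x₂ y₂ : V)
    (h₁ : X.Adj x₁ y₁) (h₂ : X.Adj x₂ y₂)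
    (hx₁ : x₁ ∈ b) (hy₁ : y₁ ∉ b) (hx₂ : x₂ ∈ b) (hy₂ : y₂ ∉ b)
    (hp : (X.induce b).Reachable ⟨x₁, hx₁⟩ ⟨x₂, hx₂⟩)
    (hq : (X.induce bᶜ).Reachable ⟨y₁, Set.mem_compl hy₁⟩ ⟨y₂, Set.mem_compl hy₂⟩) :
    ∃ b' : Set V, MemBX X b' ∧ Tight X b' ∧ cob X b' ⊆ cob X b ∧
      s(x₁, y₁) ∈ cob X b' ∧ s(x₂, y₂) ∈ cob X b' := by
  classical
  -- A : vertices reachable from x₁ inside b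
  set A : Set V := {v | ∃ p : X.Walk x₁ v, ∀ x ∈ p.support, x ∈ b} with hA
  have hAb : A ⊆ b := by
    rintro v ⟨p, hps⟩
    exact hps v p.end_mem_support
  have hx₁A : x₁ ∈ A := ⟨Walk.nil, by simpa using hx₁⟩
  have hAclosed : ∀ u ∈ A, ∀ w ∈ b, X.Adj u w → w ∈ A := by
    rintro u ⟨p, hps⟩ w hw hadj
    refine ⟨p.concat hadj, ?_⟩
    intro x hx
    simp only [Walk.support_concat, List.concat_eq_append, List.mem_append,
      List.mem_singleton] at hx
    rcases hx with hx | rfl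
    · exact hps x hx
    · exact hw
  have hx₂A : x₂ ∈ A := (reach_iff hx₁ hx₂).mp hp
  have hy₁A : y₁ ∉ A := fun h => hy₁ (hAb h)
  -- C : vertices reachable from y₁ outside A
  set C : Set V := {v | ∃ p : X.Walk y₁ v, ∀ x ∈ p.support, x ∉ A} with hC
  have hCA : ∀ v ∈ C, v ∉ A := by
    rintro v ⟨p, hps⟩
    exact hps v p.end_mem_support
  have hy₁C : y₁ ∈ C := ⟨Walk.nil, by simpa using hy₁A⟩
  have hCclosed : ∀ u ∈ C, ∀ w, w ∉ A → X.Adj u w → w ∈ C := by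
    rintro u ⟨p, hps⟩ w hw hadj
    refine ⟨p.concat hadj, ?_⟩
    intro x hx
    simp only [Walk.support_concat, List.concat_eq_append, List.mem_append,
      List.mem_singleton] at hx
    rcases hx with hx | rfl
    · exact hps x hx
    · exact hw
  have hy₂C : y₂ ∈ C := by
    obtain ⟨q, hqs⟩ := (reach_iff (Set.mem_compl hy₁) (Set.mem_compl hy₂)).mp hq
    exact ⟨q, fun x hx hxA => (hqs x hx) (hAb hxA)⟩
  have hACc : ∀ v ∈ A, v ∈ Cᶜ := fun v hv hvC => hCA v hvC hv
  have hx₁Cc : x₁ ∈ Cᶜ := hACc x₁ hx₁A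
  -- coboundary inclusion
  have hsub : cob X Cᶜ ⊆ cob X b := by
    rintro e ⟨u, w, rfl, hadj, hu, hw⟩
    have hwC : w ∈ C := not_not.mp hw
    have huA : u ∈ A := by
      by_contra huA
      exact hu (hCclosed w hwC u huA hadj.symm)
    have hwb : w ∉ b := by
      intro hwb
      exact hCA w hwC (hAclosed u huA w hwb hadj)
    exact ⟨u, w, rfl, hadj, hAb huA, hwb⟩
  -- reachability inside Cᶜ from x₁ to any element of A
  have reachA : ∀ v (hv : v ∈ A), (X.induce Cᶜ).Reachable ⟨x₁, hx₁Cc⟩ ⟨v, hACc v hv⟩ := by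
    rintro v ⟨p, hps⟩
    refine (reach_iff hx₁Cc (hACc v ⟨p, hps⟩)).mpr ⟨p, ?_⟩
    intro x hx
    refine hACc x ⟨p.takeUntil x hx, ?_⟩
    intro z hz
    exact hps z (Walk.support_takeUntil_subset p hx hz)
  have key : ∀ (v w : V) (p : X.Walk v w) (hv : v ∈ Cᶜ) (hw : w ∈ A),
      (X.induce Cᶜ).Reachable ⟨v, hv⟩ ⟨x₁, hx₁Cc⟩ := by
    intro v w p
    induction p with
    | nil => intro hv hw; exact (reachA _ hw).symm
    | @cons a c d h q ih =>
      intro hv hw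
      by_cases haA : a ∈ A
      · exact (reachA a haA).symm
      · have hcC : c ∈ Cᶜ := fun hcC => hv (hCclosed c hcC a haA h.symm)
        exact Reachable.trans
          (Adj.reachable (show (X.induce Cᶜ).Adj ⟨a, hv⟩ ⟨c, hcC⟩ from h)) (ih hcC hw)
  refine ⟨Cᶜ, hb.subset hsub, ⟨?_, ?_⟩, hsub, ?_, ?_⟩
  · rw [connected_iff_exists_forall_reachable]
    refine ⟨⟨x₁, hx₁Cc⟩, ?_⟩
    rintro ⟨v, hv⟩
    obtain ⟨p⟩ := hc.preconnected v x₁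
    exact (key v x₁ p hv hx₁A).symm
  · rw [compl_compl]
    rw [connected_iff_exists_forall_reachable]
    refine ⟨⟨y₁, hy₁C⟩, ?_⟩
    rintro ⟨v, hv⟩
    obtain ⟨p, hps⟩ := id hv
    refine (reach_iff hy₁C hv).mpr ⟨p, ?_⟩
    intro x hx
    exact ⟨p.takeUntil x hx, fun z hz => hps z (Walk.support_takeUntil_subset p hx hz)⟩
  · exact ⟨x₁, y₁, rfl, h₁, hx₁Cc, not_not.mpr hy₁C⟩
  · exact ⟨x₂, y₂, rfl, h₂, hACc x₂ hx₂A, not_not.mpr hy₂C⟩
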